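/- Let L > 0, let r ∈ ℝ³ with ‖r‖₂ = 1, and let m : [0,L] → ℝ³ be twice continuously differentiable with m'(0) = m'(L) = 0. Then ∫₀ᴸ (r × m(x)) · (m(x) × m''(x)) dx ≤ 2L² ∫₀ᴸ ‖m'(x)‖₂² dx + (1/2) ∫₀ᴸ ‖m(x) × m''(x)‖₂² dx. (The cross-term estimate from the proof of the paper's Theorem 3.7, combining integration by parts, Cauchy–Schwarz, the Poincaré-type inequality for cross products, Young's inequality, and the bound ‖r × v‖₂ ≤ ‖v‖₂; the paper records the weaker constant 8L⁴ in place of 2L².) -/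

import Mathlib

set_option maxHeartbeats 1000000


open RealInnerProductSpace

/-- Cross product on `ℝ³ = EuclideanSpace ℝ (Fin 3)`. -/
noncomputable def cross3 (u v : EuclideanSpace ℝ (Fin 3)) : EuclideanSpace ℝ (Fin 3) :=
  (WithLp.equiv 2 (Fin 3 → ℝ)).symm
    ![u 1 * v 2 - u 2 * v 1, u 2 * v 0 - u 0 * v 2, u 0 * v 1 - u 1 * v 0]

section Aux

local notation "E3" => EuclideanSpace ℝ (Fin 3)

lemma cross3_c0 (u v : E3) : cross3 u v 0 = u 1 * v 2 - u 2 * v 1 := rfl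
lemma cross3_c1 (u v : E3) : cross3 u v 1 = u 2 * v 0 - u 0 * v 2 := rfl
lemma cross3_c2 (u v : E3) : cross3 u v 2 = u 0 * v 1 - u 1 * v 0 := rfl

lemma euc_ext' {u v : E3} (h0 : u 0 = v 0) (h1 : u 1 = v 1) (h2 : u 2 = v 2) : u = v := by
  ext i; fin_cases i <;> assumption

lemma cross3_self (v : E3) : cross3 v v = 0 := by
  apply euc_ext' <;> simp [cross3_c0, cross3_c1, cross3_c2] <;> ring

lemma cross3_zero_right (v : E3) : cross3 v 0 = 0 := by
  apply euc_ext' <;> simp [cross3_c0, cross3_c1, cross3_c2]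

lemma cross3_zero_left (v : E3) : cross3 0 v = 0 := by
  apply euc_ext' <;> simp [cross3_c0, cross3_c1, cross3_c2]

lemma norm_sq_euc (w : E3) : ‖w‖ ^ 2 = w 0 ^ 2 + w 1 ^ 2 + w 2 ^ 2 := by
  rw [EuclideanSpace.norm_eq, Real.sq_sqrt (by positivity)]
  simp [Fin.sum_univ_three]

lemma norm_cross3_le (u v : E3) : ‖cross3 u v‖ ≤ ‖u‖ * ‖v‖ := by
  have h : ‖cross3 u v‖ ^ 2 ≤ (‖u‖ * ‖v‖) ^ 2 := by
    rw [norm_sq_euc, cross3_c0, cross3_c1, cross3_c2, mul_pow, norm_sq_euc, norm_sq_euc]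
    nlinarith [sq_nonneg (u 0 * v 0 + u 1 * v 1 + u 2 * v 2)]
  calc ‖cross3 u v‖ = √(‖cross3 u v‖ ^ 2) := (Real.sqrt_sq (norm_nonneg _)).symm
    _ ≤ √((‖u‖ * ‖v‖) ^ 2) := Real.sqrt_le_sqrt h
    _ = ‖u‖ * ‖v‖ := Real.sqrt_sq (by positivity)

lemma hasDerivAt_euc_iff {f : ℝ → E3} {f' : E3} {x : ℝ} :
    HasDerivAt f f' x ↔ ∀ i, HasDerivAt (fun y => f y i) (f' i) x := by
  constructor
  · intro h
    exact hasDerivAt_pi.1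
      ((PiLp.continuousLinearEquiv 2 ℝ (fun _ : Fin 3 => ℝ)).toContinuousLinearMap.hasFDerivAt.comp_hasDerivAt x h)
  · intro h
    exact ((PiLp.continuousLinearEquiv 2 ℝ (fun _ : Fin 3 => ℝ)).symm.toContinuousLinearMap.hasFDerivAt.comp_hasDerivAt x (hasDerivAt_pi.2 h))

lemma continuous_euc_iff {f : ℝ → E3} :
    Continuous f ↔ ∀ i, Continuous fun y => f y i := by
  constructor
  · intro h i
    exact (continuous_apply i).comp
      ((PiLp.continuousLinearEquiv 2 ℝ (fun _ : Fin 3 => ℝ)).continuous.comp h)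
  · intro h
    exact (PiLp.continuousLinearEquiv 2 ℝ (fun _ : Fin 3 => ℝ)).symm.continuous.comp
      (continuous_pi h)

lemma HasDerivAt.cross3' {a b : ℝ → E3} {a' b' : E3} {x : ℝ}
    (ha : HasDerivAt a a' x) (hb : HasDerivAt b b' x) :
    HasDerivAt (fun y => cross3 (a y) (b y)) (cross3 a' (b x) + cross3 (a x) b') x := by
  rw [hasDerivAt_euc_iff] at ha hb ⊢
  have add_apply : ∀ (p q : E3) (j : Fin 3), (p + q) j = p j + q j := fun _ _ _ => rfl
  intro i
  fin_cases i
  · show HasDerivAt (fun y => cross3 (a y) (b y) 0) ((cross3 a' (b x) + cross3 (a x) b') 0) x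
    simp only [add_apply, cross3_c0]
    have h := ((ha 1).mul (hb 2)).sub ((ha 2).mul (hb 1))
    exact h.congr_deriv (by ring)
  · show HasDerivAt (fun y => cross3 (a y) (b y) 1) ((cross3 a' (b x) + cross3 (a x) b') 1) x
    simp only [add_apply, cross3_c1]
    have h := ((ha 2).mul (hb 0)).sub ((ha 0).mul (hb 2))
    exact h.congr_deriv (by ring)
  · show HasDerivAt (fun y => cross3 (a y) (b y) 2) ((cross3 a' (b x) + cross3 (a x) b') 2) x
    simp only [add_apply, cross3_c2]
    have h := ((ha 0).mul (hb 1)).sub ((ha 1).mul (hb 0))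
    exact h.congr_deriv (by ring)

lemma Continuous.cross3' {a b : ℝ → E3} (ha : Continuous a) (hb : Continuous b) :
    Continuous fun y => cross3 (a y) (b y) := by
  rw [continuous_euc_iff] at ha hb ⊢
  intro i
  fin_cases i
  · show Continuous fun y => cross3 (a y) (b y) 0
    simp only [cross3_c0]; exact ((ha 1).mul (hb 2)).sub ((ha 2).mul (hb 1))
  · show Continuous fun y => cross3 (a y) (b y) 1
    simp only [cross3_c1]; exact ((ha 2).mul (hb 0)).sub ((ha 0).mul (hb 2))
  · show Continuous fun y => cross3 (a y) (b y) 2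
    simp only [cross3_c2]; exact ((ha 0).mul (hb 1)).sub ((ha 1).mul (hb 0))

end Aux

/-- For `r ∈ ℝ³` with `‖r‖ = 1` and `m : [0,L] → ℝ³` twice continuously
differentiable with `m'(0) = m'(L) = 0`, the cross-term estimate
`∫₀ᴸ (r × m)·(m × m'') dx ≤ 2L² ∫₀ᴸ ‖m'‖² dx + (1/2) ∫₀ᴸ ‖m × m''‖² dx` holds. -/
theorem cross_term_estimate
    (L : ℝ) (hL : 0 < L)
    (r : EuclideanSpace ℝ (Fin 3)) (hr : ‖r‖ = 1)
    (m : ℝ → EuclideanSpace ℝ (Fin 3)) (hm : ContDiff ℝ 2 m)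
    (hb0 : deriv m 0 = 0) (hbL : deriv m L = 0) :
    ∫ x in (0 : ℝ)..L, ⟪cross3 r (m x), cross3 (m x) (deriv (deriv m) x)⟫
      ≤ 2 * L ^ 2 * (∫ x in (0 : ℝ)..L, ‖deriv m x‖ ^ 2)
        + (1 / 2) * ∫ x in (0 : ℝ)..L, ‖cross3 (m x) (deriv (deriv m) x)‖ ^ 2 := by
  -- basic differentiability facts
  have hdiff : Differentiable ℝ m := hm.differentiable (by norm_num)
  have hm1 : ContDiff ℝ 1 (deriv m) := by
    have h2 : ContDiff ℝ (1 + 1) m := by exact_mod_cast hm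
    exact (contDiff_succ_iff_deriv.mp h2).2.2
  have hdm : ∀ x, HasDerivAt m (deriv m x) x := fun x => (hdiff x).hasDerivAt
  have hdm' : ∀ x, HasDerivAt (deriv m) (deriv (deriv m) x) x :=
    fun x => ((hm1.differentiable (by norm_num)) x).hasDerivAt
  have cm : Continuous m := hm.continuous
  have cm' : Continuous (deriv m) := hm1.continuous
  have cm'' : Continuous (deriv (deriv m)) := hm1.continuous_deriv le_rfl
  set F : ℝ → EuclideanSpace ℝ (Fin 3) := fun x => cross3 (m x) (deriv m x) with hFdef
  set G : ℝ → EuclideanSpace ℝ (Fin 3) := fun x => cross3 (m x) (deriv (deriv m) x) with hGdef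
  have cF : Continuous F := cm.cross3' cm'
  have cG : Continuous G := cm.cross3' cm''
  have hF0 : F 0 = 0 := by simp only [hFdef, hb0, cross3_zero_right]
  have hFL : F L = 0 := by simp only [hFdef, hbL, cross3_zero_right]
  have hdF : ∀ x, HasDerivAt F (G x) x := by
    intro x
    have h := (hdm x).cross3' (hdm' x)
    simpa [cross3_self] using h
  -- integration by parts
  have hRm : ∀ x, HasDerivAt (fun y => cross3 r (m y)) (cross3 r (deriv m x)) x := by
    intro x
    have h := (hasDerivAt_const x r).cross3' (hdm x)
    simpa [cross3_zero_left] using h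
  have hinner : ∀ x, HasDerivAt (fun y => ⟪cross3 r (m y), F y⟫)
      (⟪cross3 r (m x), G x⟫ + ⟪cross3 r (deriv m x), F x⟫) x :=
    fun x => (hRm x).inner ℝ (hdF x)
  have cInner1 : Continuous fun x => ⟪cross3 r (m x), G x⟫ :=
    (continuous_const.cross3' cm).inner cG
  have cInner2 : Continuous fun x => ⟪cross3 r (deriv m x), F x⟫ :=
    (continuous_const.cross3' cm').inner cF
  have hibp : (∫ x in (0 : ℝ)..L,
      (⟪cross3 r (m x), G x⟫ + ⟪cross3 r (deriv m x), F x⟫)) = 0 := by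
    rw [intervalIntegral.integral_eq_sub_of_hasDerivAt (fun x _ => hinner x)
      ((cInner1.add cInner2).intervalIntegrable 0 L)]
    rw [hF0, hFL]
    simp
  have hsplit : ∫ x in (0 : ℝ)..L, ⟪cross3 r (m x), G x⟫
      = - ∫ x in (0 : ℝ)..L, ⟪cross3 r (deriv m x), F x⟫ := by
    have hadd := intervalIntegral.integral_add (μ := MeasureTheory.volume) (cInner1.intervalIntegrable 0 L)
      (cInner2.intervalIntegrable 0 L)
    rw [hadd] at hibp
    linarith
  -- FTC representation of F
  have hFrep : ∀ x, F x = ∫ t in (0 : ℝ)..x, G t := by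
    intro x
    rw [intervalIntegral.integral_eq_sub_of_hasDerivAt (fun t _ => hdF t)
      (cG.intervalIntegrable 0 x), hF0, sub_zero]
  set I := ∫ t in (0 : ℝ)..L, ‖G t‖ with hIdef
  set B := ∫ t in (0 : ℝ)..L, ‖G t‖ ^ 2 with hBdef
  have hInn : 0 ≤ I := intervalIntegral.integral_nonneg hL.le (fun t _ => norm_nonneg _)
  have hBnn : 0 ≤ B := intervalIntegral.integral_nonneg hL.le (fun t _ => sq_nonneg _)
  have cGn : Continuous fun t => ‖G t‖ := cG.norm
  -- Cauchy–Schwarz via nonnegativity of a square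
  have hIB : I ^ 2 ≤ L * B := by
    have h0 : 0 ≤ ∫ t in (0 : ℝ)..L, (L * ‖G t‖ - I) ^ 2 :=
      intervalIntegral.integral_nonneg hL.le (fun t _ => sq_nonneg _)
    have hexp : (∫ t in (0 : ℝ)..L, (L * ‖G t‖ - I) ^ 2)
        = L ^ 2 * B - 2 * L * I * I + I ^ 2 * L := by
      have e1 : ∀ t : ℝ, (L * ‖G t‖ - I) ^ 2
          = L ^ 2 * ‖G t‖ ^ 2 - 2 * L * I * ‖G t‖ + I ^ 2 := by intro t; ring
      simp_rw [e1]
      rw [intervalIntegral.integral_add (f := fun t => L ^ 2 * ‖G t‖ ^ 2 - 2 * L * I * ‖G t‖)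
          (g := fun _ => I ^ 2) (((continuous_const.mul (cGn.pow 2)).sub
          (continuous_const.mul cGn)).intervalIntegrable 0 L) intervalIntegrable_const,
        intervalIntegral.integral_sub (f := fun t => L ^ 2 * ‖G t‖ ^ 2)
          (g := fun t => 2 * L * I * ‖G t‖) ((continuous_const.mul (cGn.pow 2)).intervalIntegrable 0 L)
          ((continuous_const.mul cGn).intervalIntegrable 0 L),
        intervalIntegral.integral_const_mul, intervalIntegral.integral_const_mul,
        intervalIntegral.integral_const, ← hIdef, ← hBdef]
      simp only [smul_eq_mul, sub_zero]
      ring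
    rw [hexp] at h0
    nlinarith [h0, hL]
  -- pointwise bound on ‖F x‖²
  have hFle : ∀ x ∈ Set.Icc (0 : ℝ) L, ‖F x‖ ^ 2 ≤ L * B := by
    intro x hx
    have h1 : ‖F x‖ ≤ I := by
      rw [hFrep x]
      calc ‖∫ t in (0 : ℝ)..x, G t‖ ≤ ∫ t in (0 : ℝ)..x, ‖G t‖ :=
            intervalIntegral.norm_integral_le_integral_norm hx.1
        _ ≤ I := intervalIntegral.integral_mono_interval le_rfl hx.1 hx.2
            (Filter.Eventually.of_forall fun t => norm_nonneg _)
            (cGn.intervalIntegrable 0 L)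
    calc ‖F x‖ ^ 2 ≤ I ^ 2 := by nlinarith [norm_nonneg (F x)]
      _ ≤ L * B := hIB
  -- pointwise Young inequality
  have hpt : ∀ x ∈ Set.Icc (0 : ℝ) L, -⟪cross3 r (deriv m x), F x⟫
      ≤ L ^ 2 / 2 * ‖deriv m x‖ ^ 2 + B / (2 * L) := by
    intro x hx
    have h1 : -⟪cross3 r (deriv m x), F x⟫ ≤ ‖deriv m x‖ * ‖F x‖ := by
      calc -⟪cross3 r (deriv m x), F x⟫ ≤ |⟪cross3 r (deriv m x), F x⟫| := neg_le_abs _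
        _ ≤ ‖cross3 r (deriv m x)‖ * ‖F x‖ := abs_real_inner_le_norm _ _
        _ ≤ (‖r‖ * ‖deriv m x‖) * ‖F x‖ :=
            mul_le_mul_of_nonneg_right (norm_cross3_le _ _) (norm_nonneg _)
        _ = ‖deriv m x‖ * ‖F x‖ := by rw [hr, one_mul]
    have h2 : ‖F x‖ ^ 2 ≤ L * B := hFle x hx
    have key : 2 * L ^ 2 * (‖deriv m x‖ * ‖F x‖)
        ≤ L ^ 2 * (L ^ 2 * ‖deriv m x‖ ^ 2) + ‖F x‖ ^ 2 := by
      nlinarith [sq_nonneg (L ^ 2 * ‖deriv m x‖ - ‖F x‖)]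
    have h3 : ‖deriv m x‖ * ‖F x‖
        ≤ L ^ 2 / 2 * ‖deriv m x‖ ^ 2 + 1 / (2 * L ^ 2) * ‖F x‖ ^ 2 := by
      rw [← sub_nonneg]
      have heq : L ^ 2 / 2 * ‖deriv m x‖ ^ 2 + 1 / (2 * L ^ 2) * ‖F x‖ ^ 2
          - ‖deriv m x‖ * ‖F x‖
          = (L ^ 2 * (L ^ 2 * ‖deriv m x‖ ^ 2) + ‖F x‖ ^ 2
              - 2 * L ^ 2 * (‖deriv m x‖ * ‖F x‖)) / (2 * L ^ 2) := by
        field_simp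
      rw [heq]
      exact div_nonneg (by linarith) (by positivity)
    have h4 : 1 / (2 * L ^ 2) * ‖F x‖ ^ 2 ≤ B / (2 * L) := by
      have h5 : 1 / (2 * L ^ 2) * ‖F x‖ ^ 2 ≤ 1 / (2 * L ^ 2) * (L * B) :=
        mul_le_mul_of_nonneg_left h2 (by positivity)
      have h6 : 1 / (2 * L ^ 2) * (L * B) = B / (2 * L) := by
        field_simp
      linarith
    linarith
  -- integrate the pointwise bound
  set A := ∫ x in (0 : ℝ)..L, ‖deriv m x‖ ^ 2 with hAdef
  have hA : 0 ≤ A := intervalIntegral.integral_nonneg hL.le (fun t _ => sq_nonneg _)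
  have hint2 : - ∫ x in (0 : ℝ)..L, ⟪cross3 r (deriv m x), F x⟫
      ≤ L ^ 2 / 2 * A + B / 2 := by
    rw [← intervalIntegral.integral_neg]
    have cmn : Continuous fun x : ℝ => ‖deriv m x‖ := cm'.norm
    calc (∫ x in (0 : ℝ)..L, -⟪cross3 r (deriv m x), F x⟫)
        ≤ ∫ x in (0 : ℝ)..L, (L ^ 2 / 2 * ‖deriv m x‖ ^ 2 + B / (2 * L)) :=
          intervalIntegral.integral_mono_on hL.le
            ((cInner2.neg).intervalIntegrable 0 L)
            (((continuous_const.mul (cmn.pow 2)).add continuous_const).intervalIntegrable 0 L)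
            hpt
      _ = L ^ 2 / 2 * A + B / 2 := by
          rw [intervalIntegral.integral_add (f := fun x => L ^ 2 / 2 * ‖deriv m x‖ ^ 2)
            (g := fun _ => B / (2 * L)) ((continuous_const.mul (cmn.pow 2)).intervalIntegrable 0 L)
            (intervalIntegrable_const), intervalIntegral.integral_const_mul,
            intervalIntegral.integral_const, ← hAdef]
          simp only [smul_eq_mul, sub_zero]
          field_simp
  rw [hsplit]
  have hfin : L ^ 2 / 2 * A ≤ 2 * L ^ 2 * A := by nlinarith [hA, sq_nonneg L]
  linarith
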